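/- Let ψ ∈ (0,1) and let C(n,p) satisfy C(n,p+1) = ψ·C(n,p) + C(n−1,p) + (1−ψ)·C(n−2,p), with C(n,p) = 0 for n ≤ 0 and C(n,1) = 2 for n ≥ 1. Then for each fixed n ≥ 1, C(n,p)/[2·binom(p+n−1, n−1)·ψ^{p−n}] → 1 as p → ∞. In particular C(n,p) → 0 as p → ∞. -/

import Mathlib

open Filter Finset Asymptotics Topology


private lemma powLO {a b : ℕ} (h : a < b) :
    (fun p : ℕ => (p : ℝ) ^ a) =o[atTop] fun p : ℕ => (p : ℝ) ^ b :=
  (Asymptotics.isLittleO_pow_pow_atTop_of_lt (𝕜 := ℝ) h).comp_tendsto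
    tendsto_natCast_atTop_atTop

private lemma sumLO {d : ℕ → ℝ} {k : ℕ}
    (h : d =o[atTop] fun p : ℕ => (p : ℝ) ^ k) :
    (fun P : ℕ => ∑ p ∈ Finset.range P, d p) =o[atTop]
      fun P : ℕ => (P : ℝ) ^ (k + 1) := by
  have hg : ∀ p : ℕ, 0 ≤ ((p : ℝ)) ^ k := fun p => pow_nonneg (Nat.cast_nonneg p) k
  have h'g : Tendsto (fun n : ℕ => ∑ i ∈ range n, ((i : ℝ)) ^ k) atTop atTop := by
    apply tendsto_atTop_mono (f := fun n : ℕ => ((n - 1 : ℕ) : ℝ))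
    · intro n
      have h1 : ((n - 1 : ℕ) : ℝ) = ∑ _i ∈ Ico 1 n, (1 : ℝ) := by
        simp [Nat.card_Ico]
      rw [h1]
      refine le_trans (Finset.sum_le_sum (g := fun i : ℕ => (i : ℝ) ^ k)
        fun i hi => one_le_pow₀ (by exact_mod_cast (Finset.mem_Ico.1 hi).1)) ?_
      apply Finset.sum_le_sum_of_subset_of_nonneg
      · intro i hi; exact Finset.mem_range.2 (Finset.mem_Ico.1 hi).2
      · intro i _ _; exact hg i
    · exact tendsto_natCast_atTop_atTop.comp (tendsto_sub_atTop_nat 1)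
  have hsum := h.sum_range hg h'g
  refine hsum.trans_isBigO (Asymptotics.IsBigO.of_bound 1 ?_)
  filter_upwards with n
  have hb : ∑ i ∈ range n, ((i : ℝ)) ^ k ≤ (n : ℝ) ^ (k + 1) := by
    calc ∑ i ∈ range n, ((i : ℝ)) ^ k ≤ ∑ _i ∈ range n, ((n : ℝ)) ^ k := by
          refine Finset.sum_le_sum fun i hi => ?_
          exact pow_le_pow_left₀ (Nat.cast_nonneg i)
            (by exact_mod_cast (Finset.mem_range.1 hi).le) k
      _ = (n : ℝ) * (n : ℝ) ^ k := by simp [mul_comm]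
      _ = (n : ℝ) ^ (k + 1) := by ring
  have h0 : (0:ℝ) ≤ ∑ i ∈ range n, ((i : ℝ)) ^ k := Finset.sum_nonneg fun i _ => hg i
  rw [Real.norm_of_nonneg h0, Real.norm_of_nonneg (by positivity), one_mul]
  exact hb

private lemma incrLO {f : ℕ → ℝ} {k : ℕ}
    (h : (fun p : ℕ => f (p + 1) - f p) =o[atTop] fun p : ℕ => (p : ℝ) ^ k) :
    f =o[atTop] fun p : ℕ => (p : ℝ) ^ (k + 1) := by
  have h1 := sumLO h
  have h2 : (fun _ : ℕ => f 0) =o[atTop] fun P : ℕ => (P : ℝ) ^ (k + 1) := by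
    refine Asymptotics.isLittleO_const_left.2 (Or.inr ?_)
    have ht : Tendsto (fun P : ℕ => (P : ℝ) ^ (k + 1)) atTop atTop :=
      (tendsto_pow_atTop (Nat.succ_ne_zero k)).comp tendsto_natCast_atTop_atTop
    exact ht.congr fun P => (Real.norm_of_nonneg (by positivity)).symm
  have := h2.add h1
  refine this.congr_left fun P => ?_
  rw [Finset.sum_range_sub]
  ring


private lemma chooseLO (k c : ℕ) :
    Tendsto (fun p : ℕ => ((p + c).choose k : ℝ) / (p : ℝ) ^ k) atTop
      (𝓝 (1 / (k.factorial : ℝ))) := by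
  have hfac : Tendsto (fun p : ℕ => (∏ i ∈ range k, (((p : ℝ) + c - i) / p)) / (k.factorial : ℝ))
      atTop (𝓝 (1 / (k.factorial : ℝ))) := by
    have hprod : Tendsto (fun p : ℕ => ∏ i ∈ range k, (((p : ℝ) + c - i) / p)) atTop
        (𝓝 (∏ _i ∈ range k, (1 : ℝ))) := by
      refine tendsto_finset_prod _ fun i _ => ?_
      have heq : ∀ᶠ p : ℕ in atTop, 1 + ((c : ℝ) - i) / p = ((p : ℝ) + c - i) / p := by
        filter_upwards [eventually_ge_atTop 1] with p hp
        have hp0 : (p : ℝ) ≠ 0 := by positivity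
        field_simp
        ring
      have : Tendsto (fun p : ℕ => 1 + ((c : ℝ) - i) / p) atTop (𝓝 (1 + 0)) :=
        tendsto_const_nhds.add (tendsto_const_div_atTop_nhds_zero_nat _)
      simpa using this.congr' heq
    simpa using hprod.div_const _
  refine hfac.congr' ?_
  filter_upwards [eventually_ge_atTop (k + 1)] with p hp
  have hp0 : (p : ℝ) ≠ 0 := Nat.cast_ne_zero.2 (by omega)
  have hcast : ((p + c).choose k : ℝ) * (k.factorial : ℝ) = ∏ i ∈ range k, ((p : ℝ) + c - i) := by
    have h1 : (p + c).descFactorial k = ∏ i ∈ range k, (p + c - i) :=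
      Nat.descFactorial_eq_prod_range _ _
    have h2 : ((p + c).descFactorial k : ℝ) = ∏ i ∈ range k, ((p : ℝ) + c - i) := by
      rw [h1, Nat.cast_prod]
      refine Finset.prod_congr rfl fun i hi => ?_
      have hik : i ≤ p + c := le_trans (le_of_lt (Finset.mem_range.1 hi)) (by omega)
      push_cast [Nat.cast_sub hik]
      ring
    rw [← h2, Nat.descFactorial_eq_factorial_mul_choose]
    push_cast; ring
  have hsplit : ∏ i ∈ range k, (((p : ℝ) + c - i) / p)
      = (∏ i ∈ range k, ((p : ℝ) + c - i)) / (p : ℝ) ^ k := by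
    rw [Finset.prod_div_distrib, Finset.prod_const]
    simp
  rw [hsplit, ← hcast]
  have hfk : (k.factorial : ℝ) ≠ 0 := by positivity
  field_simp


private noncomputable def eAux (ψ : ℝ) (C : ℤ → ℕ → ℝ) (m p : ℕ) : ℝ :=
  C ((m : ℤ) + 1) p / ψ ^ p - 2 / ψ ^ (m + 1) * ((p - 1).choose m : ℝ)

section Key
variable (ψ : ℝ) (hψ0 : 0 < ψ) (hψ1 : ψ < 1) (C : ℤ → ℕ → ℝ)
  (hrec : ∀ (n : ℤ) (p : ℕ), 1 ≤ p →
      C n (p + 1) = ψ * C n p + C (n - 1) p + (1 - ψ) * C (n - 2) p)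
  (hzero : ∀ (n : ℤ) (p : ℕ), n ≤ 0 → C n p = 0)
  (hbc : ∀ n : ℤ, 1 ≤ n → C n 1 = 2)

include hψ0 hrec hzero hbc in
private lemma C_one (p : ℕ) : C 1 (p + 1) = 2 * ψ ^ p := by
  induction p with
  | zero => simpa using hbc 1 le_rfl
  | succ q ih =>
    have h := hrec 1 (q + 1) (by omega)
    norm_num at h
    rw [hzero 0 _ le_rfl, hzero (-1) _ (by norm_num), ih] at h
    rw [h]; ring

include hψ0 hψ1 hrec hzero hbc in
private lemma keyLO : ∀ m : ℕ,
    (fun p : ℕ => eAux ψ C m p) =o[atTop] fun p : ℕ => (p : ℝ) ^ m := by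
  have hψne : ψ ≠ 0 := ne_of_gt hψ0
  intro m
  induction m using Nat.strong_induction_on with
  | _ m IH =>
  match m with
  | 0 =>
    refine (isLittleO_zero _ _).congr' ?_ EventuallyEq.rfl
    filter_upwards [eventually_ge_atTop 1] with p hp
    obtain ⟨q, rfl⟩ : ∃ q, p = q + 1 := ⟨p - 1, by omega⟩
    simp only [eAux, Nat.cast_zero, zero_add, Nat.add_sub_cancel, Nat.choose_zero_right,
      Nat.cast_one]
    rw [C_one ψ hψ0 C hrec hzero hbc q]
    field_simp
    ring
  | 1 =>
    have h0 := IH 0 (by omega)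
    have hΔ : (fun p : ℕ => eAux ψ C 1 (p + 1) - eAux ψ C 1 p) =ᶠ[atTop]
        fun p : ℕ => ψ⁻¹ * eAux ψ C 0 p := by
      filter_upwards [eventually_ge_atTop 1] with p hp
      obtain ⟨q, rfl⟩ : ∃ q, p = q + 1 := ⟨p - 1, by omega⟩
      have h := hrec 2 (q + 1) (by omega)
      norm_num at h
      rw [hzero 0 _ le_rfl] at h
      simp only [eAux, Nat.cast_one, Nat.cast_zero, zero_add, Nat.add_sub_cancel,
        Nat.choose_one_right, Nat.choose_zero_right]
      norm_num
      rw [h]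
      push_cast
      field_simp
      ring
    exact incrLO ((h0.const_mul_left ψ⁻¹).congr' hΔ.symm EventuallyEq.rfl)
  | (m + 2) =>
    have h1 := IH (m + 1) (by omega)
    have h0 := IH m (by omega)
    have hΔ : (fun p : ℕ => eAux ψ C (m + 2) (p + 1) - eAux ψ C (m + 2) p) =ᶠ[atTop]
        fun p : ℕ => ψ⁻¹ * eAux ψ C (m + 1) p + (1 - ψ) / ψ * eAux ψ C m p
          + 2 * (1 - ψ) / ψ ^ (m + 2) * ((p - 1).choose m : ℝ) := by
      filter_upwards [eventually_ge_atTop 1] with p hp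
      obtain ⟨q, rfl⟩ : ∃ q, p = q + 1 := ⟨p - 1, by omega⟩
      have h := hrec (((m + 2 : ℕ) : ℤ) + 1) (q + 1) (by omega)
      have e1 : ((m + 2 : ℕ) : ℤ) + 1 - 1 = ((m + 1 : ℕ) : ℤ) + 1 := by push_cast; ring
      have e2 : ((m + 2 : ℕ) : ℤ) + 1 - 2 = ((m : ℕ) : ℤ) + 1 := by push_cast; ring
      rw [e1, e2] at h
      simp only [eAux, h, Nat.add_sub_cancel]
      have hp2 : (q + 1).choose (m + 2) = q.choose (m + 1) + q.choose (m + 2) :=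
        Nat.choose_succ_succ q (m + 1)
      rw [hp2]
      push_cast
      field_simp
      ring
    have hch : (fun p : ℕ => 2 * (1 - ψ) / ψ ^ (m + 2) * (((p - 1).choose m : ℕ) : ℝ))
        =o[atTop] fun p : ℕ => (p : ℝ) ^ (m + 1) := by
      have hO : (fun p : ℕ => (((p - 1).choose m : ℕ) : ℝ)) =O[atTop]
          fun p : ℕ => (p : ℝ) ^ m := by
        refine Asymptotics.IsBigO.of_bound 1 ?_
        filter_upwards with p
        rw [Real.norm_of_nonneg (Nat.cast_nonneg _), Real.norm_of_nonneg (by positivity), one_mul]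
        have : (p - 1).choose m ≤ p ^ m :=
          le_trans (Nat.choose_le_pow _ _) (Nat.pow_le_pow_left (Nat.sub_le p 1) m)
        exact_mod_cast this
      exact (hO.trans_isLittleO (powLO (by omega))).const_mul_left _
    have hsum : (fun p : ℕ => eAux ψ C (m + 2) (p + 1) - eAux ψ C (m + 2) p) =o[atTop]
        fun p : ℕ => (p : ℝ) ^ (m + 1) := by
      refine (((h1.const_mul_left ψ⁻¹).add
        (((h0.trans (powLO (by omega))).const_mul_left ((1 - ψ) / ψ)))).add hch).congr'
        hΔ.symm EventuallyEq.rfl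
    exact incrLO hsum

end Key
/-- Asymptotics of the number of admissible dichotomies for pair-structured data
(`k = 2`): `C(n,p) ∼ 2·binom(p+n−1, n−1)·ψ^{p−n}` as `p → ∞` at fixed `n ≥ 1`;
in particular `C(n,p) → 0`. -/
theorem structured_coverC_asymptotics
    (ψ : ℝ) (hψ : ψ ∈ Set.Ioo (0 : ℝ) 1)
    (C : ℤ → ℕ → ℝ)
    (hrec : ∀ (n : ℤ) (p : ℕ), 1 ≤ p →
      C n (p + 1) = ψ * C n p + C (n - 1) p + (1 - ψ) * C (n - 2) p)
    (hzero : ∀ (n : ℤ) (p : ℕ), n ≤ 0 → C n p = 0)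
    (hbc : ∀ n : ℤ, 1 ≤ n → C n 1 = 2)
    (n : ℕ) (hn : 1 ≤ n) :
    Tendsto (fun p : ℕ =>
        C (n : ℤ) p /
          (2 * (Nat.choose (p + n - 1) (n - 1) : ℝ) * ψ ^ ((p : ℤ) - (n : ℤ))))
      atTop (nhds 1) ∧
    Tendsto (fun p : ℕ => C (n : ℤ) p) atTop (nhds 0) := by
  obtain ⟨hψ0, hψ1⟩ := hψ
  have hψne : ψ ≠ 0 := ne_of_gt hψ0
  obtain ⟨k, rfl⟩ : ∃ k, n = k + 1 := ⟨n - 1, by omega⟩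
  have key := keyLO ψ hψ0 hψ1 C hrec hzero hbc k
  have hε : Tendsto (fun p : ℕ => eAux ψ C k p / (p : ℝ) ^ k) atTop (𝓝 0) :=
    key.tendsto_div_nhds_zero
  have hfac0 : ((k.factorial : ℝ)) ≠ 0 := by positivity
  have hA := chooseLO k k
  have hAinv : Tendsto (fun p : ℕ => (p : ℝ) ^ k / ((p + k).choose k : ℝ)) atTop
      (𝓝 (k.factorial : ℝ)) := by
    have := hA.inv₀ (by positivity)
    simpa [inv_div] using this
  have hB : Tendsto (fun p : ℕ => ((p - 1).choose k : ℝ) / (p : ℝ) ^ k) atTop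
      (𝓝 (1 / (k.factorial : ℝ))) := by
    have hB1 : Tendsto (fun p : ℕ => ((p - 1 + 0).choose k : ℝ) / ((p - 1 : ℕ) : ℝ) ^ k) atTop
        (𝓝 (1 / (k.factorial : ℝ))) := (chooseLO k 0).comp (tendsto_sub_atTop_nat 1)
    have hq1 : Tendsto (fun p : ℕ => ((p - 1 : ℕ) : ℝ) / (p : ℝ)) atTop (𝓝 1) := by
      have h1 : Tendsto (fun p : ℕ => 1 - 1 / (p : ℝ)) atTop (𝓝 (1 - 0)) :=
        tendsto_const_nhds.sub tendsto_one_div_atTop_nhds_zero_nat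
      rw [sub_zero] at h1
      refine h1.congr' ?_
      filter_upwards [eventually_ge_atTop 1] with p hp
      have hp0 : (p : ℝ) ≠ 0 := Nat.cast_ne_zero.2 (by omega)
      rw [Nat.cast_sub hp]
      field_simp
      simp
    have hq := hq1.pow k
    have := hB1.mul hq
    rw [one_pow, mul_one] at this
    refine this.congr' ?_
    filter_upwards [eventually_ge_atTop 2] with p hp
    have hp0 : ((p : ℕ) : ℝ) ≠ 0 := Nat.cast_ne_zero.2 (by omega)
    have hp1 : ((p : ℝ) - 1) ≠ 0 := by
      have : (2 : ℝ) ≤ (p : ℝ) := by exact_mod_cast hp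
      linarith
    rw [Nat.add_zero, Nat.cast_sub (by omega : 1 ≤ p), Nat.cast_one]
    field_simp
    rw [div_pow, mul_assoc, div_mul_cancel₀ _ (pow_ne_zero _ hp0)]
  constructor
  · have hmain : Tendsto (fun p : ℕ =>
        ((p - 1).choose k : ℝ) / (p : ℝ) ^ k * ((p : ℝ) ^ k / ((p + k).choose k : ℝ))
          + ψ ^ (k + 1) / 2 * (eAux ψ C k p / (p : ℝ) ^ k)
            * ((p : ℝ) ^ k / ((p + k).choose k : ℝ))) atTop
        (𝓝 (1 / (k.factorial : ℝ) * (k.factorial : ℝ)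
          + ψ ^ (k + 1) / 2 * 0 * (k.factorial : ℝ))) :=
      (hB.mul hAinv).add ((tendsto_const_nhds.mul hε).mul hAinv)
    have hlim : 1 / (k.factorial : ℝ) * (k.factorial : ℝ)
        + ψ ^ (k + 1) / 2 * 0 * (k.factorial : ℝ) = 1 := by field_simp; simp
    rw [hlim] at hmain
    refine hmain.congr' ?_
    filter_upwards [eventually_ge_atTop 1] with p hp
    have hp0 : ((p : ℕ) : ℝ) ≠ 0 := Nat.cast_ne_zero.2 (by omega)
    have hA0 : (((p + k).choose k : ℕ) : ℝ) ≠ 0 :=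
      Nat.cast_ne_zero.2 (Nat.choose_pos (by omega)).ne'
    have hψp : ψ ^ p ≠ 0 := pow_ne_zero _ hψne
    have hC : C ((k : ℤ) + 1) p
        = (eAux ψ C k p + 2 / ψ ^ (k + 1) * (((p - 1).choose k : ℕ) : ℝ)) * ψ ^ p := by
      simp only [eAux]
      field_simp
      ring
    have hz : ψ ^ ((p : ℤ) - ((k : ℤ) + 1)) = ψ ^ p / ψ ^ (k + 1) := by
      rw [zpow_sub₀ hψne, zpow_natCast,
        show ((k : ℤ) + 1) = ((k + 1 : ℕ) : ℤ) by push_cast; ring, zpow_natCast]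
    simp only [show p + (k + 1) - 1 = p + k from by omega, show k + 1 - 1 = k from by omega,
      Nat.cast_add, Nat.cast_one]
    rw [hz, hC]
    field_simp
    ring
  · have h2 : Tendsto (fun p : ℕ => (p : ℝ) ^ k * ψ ^ p) atTop (𝓝 0) :=
      (summable_pow_mul_geometric_of_norm_lt_one (R := ℝ) k
        (by rw [Real.norm_eq_abs, abs_of_pos hψ0]; exact hψ1)).tendsto_atTop_zero
    have hch0 : Tendsto (fun p : ℕ => (((p - 1).choose k : ℕ) : ℝ) * ψ ^ p) atTop (𝓝 0) := by
      refine squeeze_zero (fun p => by positivity) (fun p => ?_) h2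
      have hcb : ((p - 1).choose k : ℕ) ≤ p ^ k :=
        le_trans (Nat.choose_le_pow _ _) (Nat.pow_le_pow_left (Nat.sub_le p 1) k)
      have : (((p - 1).choose k : ℕ) : ℝ) ≤ (p : ℝ) ^ k := by exact_mod_cast hcb
      exact mul_le_mul_of_nonneg_right this (pow_nonneg hψ0.le p)
    have htot := (hch0.const_mul (2 / ψ ^ (k + 1))).add (hε.mul h2)
    rw [mul_zero, zero_mul, add_zero] at htot
    refine htot.congr' ?_
    filter_upwards [eventually_ge_atTop 1] with p hp
    have hp0 : ((p : ℕ) : ℝ) ≠ 0 := Nat.cast_ne_zero.2 (by omega)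
    have hψp : ψ ^ p ≠ 0 := pow_ne_zero _ hψne
    simp only [eAux]
    push_cast
    field_simp
    ring
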